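/- Fix reals α, β, λ > 0 and set κ = λ+α+β. Define the staleness function Δ̃(μ) = (β(λ+2α)μ + λβκ)/(κμ² + (κ²+βλ)μ + λ(α+β)κ) for μ ≥ 0. If (κ−α)² + α(λ−α) < 0, then the derivative of Δ̃ at μ = 0 is strictly positive, and there exists M > 0 such that Δ̃'(μ) < 0 for all μ > M. -/

import Mathlib

/-- If (κ−α)² + α(λ−α) < 0 then the staleness Δ̃ has strictly positive
derivative at μ = 0, and its derivative is eventually negative (for all μ > M for some
M > 0). -/
theorem staleness_not_monotone
    (α β lam : ℝ) (hα : 0 < α) (hβ : 0 < β) (hlam : 0 < lam)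
    (κ : ℝ) (hκ : κ = lam + α + β)
    (hcond : (κ - α) ^ 2 + α * (lam - α) < 0) :
    0 < deriv (fun x : ℝ =>
        (β * (lam + 2 * α) * x + lam * β * κ) /
        (κ * x ^ 2 + (κ ^ 2 + β * lam) * x + lam * (α + β) * κ)) 0 ∧
    ∃ M : ℝ, 0 < M ∧ ∀ μ : ℝ, M < μ →
      deriv (fun x : ℝ =>
        (β * (lam + 2 * α) * x + lam * β * κ) /
        (κ * x ^ 2 + (κ ^ 2 + β * lam) * x + lam * (α + β) * κ)) μ < 0 := by
  have hκpos : 0 < κ := by rw [hκ]; linarith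
  set Dc : ℝ → ℝ := fun x => κ * x ^ 2 + (κ ^ 2 + β * lam) * x + lam * (α + β) * κ with hDc
  have hDpos : ∀ μ : ℝ, 0 ≤ μ → 0 < Dc μ := by
    intro μ hμ
    have h1 : 0 ≤ κ * μ ^ 2 := by positivity
    have h2 : 0 ≤ (κ ^ 2 + β * lam) * μ := by
      apply mul_nonneg _ hμ; positivity
    have h3 : 0 < lam * (α + β) * κ := by positivity
    simp only [hDc]; linarith
  have hderiv : ∀ μ : ℝ, 0 ≤ μ →
      deriv (fun x : ℝ =>
        (β * (lam + 2 * α) * x + lam * β * κ) /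
        (κ * x ^ 2 + (κ ^ 2 + β * lam) * x + lam * (α + β) * κ)) μ =
      (β * (lam + 2 * α) * Dc μ -
        (β * (lam + 2 * α) * μ + lam * β * κ) * (2 * κ * μ + (κ ^ 2 + β * lam))) /
        (Dc μ) ^ 2 := by
    intro μ hμ
    have h1 : HasDerivAt (fun x : ℝ => β * (lam + 2 * α) * x + lam * β * κ)
        (β * (lam + 2 * α)) μ := by
      simpa using ((hasDerivAt_id μ).const_mul (β * (lam + 2 * α))).add_const (lam * β * κ)
    have h2 : HasDerivAt (fun x : ℝ => κ * x ^ 2 + (κ ^ 2 + β * lam) * x + lam * (α + β) * κ)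
        (2 * κ * μ + (κ ^ 2 + β * lam)) μ := by
      have := (((hasDerivAt_pow 2 μ).const_mul κ).add
        ((hasDerivAt_id μ).const_mul (κ ^ 2 + β * lam))).add_const (lam * (α + β) * κ)
      exact this.congr_deriv (by push_cast; ring)
    exact (h1.div h2 (hDpos μ hμ).ne').deriv
  subst hκ
  constructor
  · rw [hderiv 0 le_rfl]
    apply div_pos
    · have hD0 : Dc 0 = lam * (α + β) * (lam + α + β) := by simp [hDc]
      rw [hD0]
      nlinarith [mul_pos (mul_pos hlam hβ) (show (0:ℝ) < lam + α + β by linarith),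
        mul_pos hlam hβ]
    · have := hDpos 0 le_rfl; positivity
  · set K : ℝ := β * (lam + 2 * α) * (lam * (α + β) * (lam + α + β)) -
      lam * β * (lam + α + β) * ((lam + α + β) ^ 2 + β * lam) with hK
    set A : ℝ := β * (lam + 2 * α) * (lam + α + β) with hA
    have hApos : 0 < A := by rw [hA]; positivity
    refine ⟨max 1 (K / A), lt_of_lt_of_le one_pos (le_max_left _ _), ?_⟩
    intro μ hμ
    have hμ1 : 1 < μ := lt_of_le_of_lt (le_max_left _ _) hμ
    have hμ0 : 0 < μ := by linarith
    rw [hderiv μ hμ0.le]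
    apply div_neg_of_neg_of_pos
    · have hKA : K / A < μ := lt_of_le_of_lt (le_max_right _ _) hμ
      have hK' : K < A * μ := by
        rw [div_lt_iff₀ hApos] at hKA; linarith [hKA]
      have hsq : A * μ < A * μ ^ 2 := by
        have : μ < μ ^ 2 := by nlinarith
        exact (mul_lt_mul_iff_right₀ hApos).mpr this
      have hbc : 0 < 2 * (lam * β * (lam + α + β)) * ((lam + α + β)) * μ := by positivity
      simp only [hDc]
      nlinarith [hK', hsq, mul_pos (mul_pos hlam hβ) hμ0,
        mul_pos (mul_pos (mul_pos hlam hβ) (show (0:ℝ) < lam + α + β by linarith)) hμ0]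
    · have := hDpos μ hμ0.le; positivity
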